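/- For every pair of finite simple graphs G₁ and G₂, χ_NL(G₁ ∨ G₂) = χ_NL(G₁) + χ_NL(G₂). -/

import Mathlib

open SimpleGraph

/-- A coloring `c : V → Fin k` is a *neighbor-locating coloring* of `G` if it is proper and
any two distinct vertices with the same color have different sets of colors on their
open neighborhoods. -/
def IsNLColoring {V : Type*} (G : SimpleGraph V) {k : ℕ} (c : V → Fin k) : Prop :=
  (∀ u v : V, G.Adj u v → c u ≠ c v) ∧
  ∀ u v : V, u ≠ v → c u = c v → c '' (G.neighborSet u) ≠ c '' (G.neighborSet v)

/-- The neighbor-locating chromatic number: the least `k` admitting an NL-coloring. -/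
noncomputable def nlChromaticNumber {V : Type*} (G : SimpleGraph V) : ℕ :=
  sInf {k : ℕ | ∃ c : V → Fin k, IsNLColoring G c}

/-- The join of two graphs: all edges of each plus all pairs across. -/
def graphJoin {α β : Type*} (G : SimpleGraph α) (H : SimpleGraph β) : SimpleGraph (α ⊕ β) where
  Adj x y :=
    match x, y with
    | Sum.inl a, Sum.inl b => G.Adj a b
    | Sum.inr a, Sum.inr b => H.Adj a b
    | Sum.inl _, Sum.inr _ => True
    | Sum.inr _, Sum.inl _ => True
  symm := ⟨by rintro (a | a) (b | b) h <;> first | exact G.adj_symm h | exact H.adj_symm h | trivial⟩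
  loopless := ⟨by rintro (a | a) h <;> first | exact G.irrefl h | exact H.irrefl h⟩

section NLAux

variable {α β : Type*}

lemma unionCancelOfDisjoint {γ : Type*} {X Y B : Set γ}
    (hX : Disjoint X B) (hY : Disjoint Y B) (h : X ∪ B = Y ∪ B) : X = Y := by
  ext x
  constructor
  · intro hx
    have hx' : x ∈ Y ∪ B := h ▸ Set.mem_union_left B hx
    rcases hx' with h' | h'
    · exact h'
    · exact absurd h' (Set.disjoint_left.mp hX hx)
  · intro hx
    have hx' : x ∈ X ∪ B := h ▸ Set.mem_union_left B hx
    rcases hx' with h' | h'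
    · exact h'
    · exact absurd h' (Set.disjoint_left.mp hY hx)

lemma nbrJoinInl (G₁ : SimpleGraph α) (G₂ : SimpleGraph β) (a : α) :
    (graphJoin G₁ G₂).neighborSet (Sum.inl a) =
      Sum.inl '' G₁.neighborSet a ∪ Set.range Sum.inr := by
  ext (x | x)
  · simp only [SimpleGraph.mem_neighborSet, Set.mem_union, Set.mem_image, Set.mem_range]
    constructor
    · intro h; exact Or.inl ⟨x, h, rfl⟩
    · rintro (⟨y, hy, he⟩ | ⟨y, he⟩)
      · cases he; exact hy
      · cases he
  · simp only [SimpleGraph.mem_neighborSet, Set.mem_union, Set.mem_image, Set.mem_range]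
    exact ⟨fun _ => Or.inr ⟨x, rfl⟩, fun _ => trivial⟩

lemma nbrJoinInr (G₁ : SimpleGraph α) (G₂ : SimpleGraph β) (b : β) :
    (graphJoin G₁ G₂).neighborSet (Sum.inr b) =
      Sum.inr '' G₂.neighborSet b ∪ Set.range Sum.inl := by
  ext (x | x)
  · simp only [SimpleGraph.mem_neighborSet, Set.mem_union, Set.mem_image, Set.mem_range]
    exact ⟨fun _ => Or.inr ⟨x, rfl⟩, fun _ => trivial⟩
  · simp only [SimpleGraph.mem_neighborSet, Set.mem_union, Set.mem_image, Set.mem_range]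
    constructor
    · intro h; exact Or.inl ⟨x, h, rfl⟩
    · rintro (⟨y, hy, he⟩ | ⟨y, he⟩)
      · cases he; exact hy
      · cases he

lemma imgNbrJoinInl (G₁ : SimpleGraph α) (G₂ : SimpleGraph β) {k : ℕ}
    (c : α ⊕ β → Fin k) (a : α) :
    c '' ((graphJoin G₁ G₂).neighborSet (Sum.inl a)) =
      (fun x => c (Sum.inl x)) '' G₁.neighborSet a ∪ Set.range (fun x => c (Sum.inr x)) := by
  rw [nbrJoinInl, Set.image_union, ← Set.image_comp, ← Set.range_comp]
  rfl

lemma imgNbrJoinInr (G₁ : SimpleGraph α) (G₂ : SimpleGraph β) {k : ℕ}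
    (c : α ⊕ β → Fin k) (b : β) :
    c '' ((graphJoin G₁ G₂).neighborSet (Sum.inr b)) =
      (fun x => c (Sum.inr x)) '' G₂.neighborSet b ∪ Set.range (fun x => c (Sum.inl x)) := by
  rw [nbrJoinInr, Set.image_union, ← Set.image_comp, ← Set.range_comp]
  rfl

lemma nlExists (V : Type*) [Fintype V] (G : SimpleGraph V) :
    ∃ c : V → Fin (Fintype.card V), IsNLColoring G c := by
  refine ⟨Fintype.equivFin V, ?_, ?_⟩
  · intro u v h heq
    exact G.ne_of_adj h ((Fintype.equivFin V).injective heq)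
  · intro u v hne heq
    exact absurd ((Fintype.equivFin V).injective heq) hne

lemma nlJoinUpper (G₁ : SimpleGraph α) (G₂ : SimpleGraph β) {k₁ k₂ : ℕ}
    {c₁ : α → Fin k₁} {c₂ : β → Fin k₂}
    (h₁ : IsNLColoring G₁ c₁) (h₂ : IsNLColoring G₂ c₂) :
    ∃ c : α ⊕ β → Fin (k₁ + k₂), IsNLColoring (graphJoin G₁ G₂) c := by
  refine ⟨Sum.elim (fun a => Fin.castAdd k₂ (c₁ a)) (fun b => Fin.natAdd k₁ (c₂ b)), ?_, ?_⟩
  · rintro (u | u) (v | v) hadj heq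
    · have hv := congrArg Fin.val heq
      simp only [Sum.elim_inl, Fin.coe_castAdd] at hv
      exact h₁.1 u v hadj (Fin.val_injective hv)
    · have hv := congrArg Fin.val heq
      simp only [Sum.elim_inl, Sum.elim_inr, Fin.coe_castAdd, Fin.coe_natAdd] at hv
      have := (c₁ u).isLt
      omega
    · have hv := congrArg Fin.val heq
      simp only [Sum.elim_inl, Sum.elim_inr, Fin.coe_castAdd, Fin.coe_natAdd] at hv
      have := (c₁ v).isLt
      omega
    · have hv := congrArg Fin.val heq
      simp only [Sum.elim_inr, Fin.coe_natAdd] at hv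
      have : (c₂ u : ℕ) = (c₂ v : ℕ) := by omega
      exact h₂.1 u v hadj (Fin.val_injective this)
  · rintro (u | u) (v | v) hne heq himg
    · -- both on the left
      have hv := congrArg Fin.val heq
      simp only [Sum.elim_inl, Fin.coe_castAdd] at hv
      have hcc : c₁ u = c₁ v := Fin.val_injective hv
      have huv : u ≠ v := fun h => hne (congrArg Sum.inl h)
      rw [imgNbrJoinInl, imgNbrJoinInl] at himg
      have hXu : (fun x => Sum.elim (fun a => Fin.castAdd k₂ (c₁ a))
          (fun b => Fin.natAdd k₁ (c₂ b)) (Sum.inl x)) '' G₁.neighborSet u =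
          Fin.castAdd k₂ '' (c₁ '' G₁.neighborSet u) := by
        rw [← Set.image_comp]; rfl
      have hXv : (fun x => Sum.elim (fun a => Fin.castAdd k₂ (c₁ a))
          (fun b => Fin.natAdd k₁ (c₂ b)) (Sum.inl x)) '' G₁.neighborSet v =
          Fin.castAdd k₂ '' (c₁ '' G₁.neighborSet v) := by
        rw [← Set.image_comp]; rfl
      rw [hXu, hXv] at himg
      have hdisj : ∀ S : Set α, Disjoint (Fin.castAdd k₂ '' (c₁ '' S))
          (Set.range fun x => Sum.elim (fun a => Fin.castAdd k₂ (c₁ a))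
            (fun b => Fin.natAdd k₁ (c₂ b)) (Sum.inr x)) := by
        intro S
        rw [Set.disjoint_left]
        rintro z ⟨y, _, rfl⟩ ⟨b, hb⟩
        have hv' := congrArg Fin.val hb
        simp only [Sum.elim_inr, Fin.coe_castAdd, Fin.coe_natAdd] at hv'
        have := y.isLt
        omega
      have hXeq := unionCancelOfDisjoint (hdisj _) (hdisj _) himg
      have : c₁ '' G₁.neighborSet u = c₁ '' G₁.neighborSet v :=
        Set.image_injective.mpr (Fin.castAdd_injective k₁ k₂) hXeq
      exact h₁.2 u v huv hcc this
    · have hv := congrArg Fin.val heq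
      simp only [Sum.elim_inl, Sum.elim_inr, Fin.coe_castAdd, Fin.coe_natAdd] at hv
      have := (c₁ u).isLt
      omega
    · have hv := congrArg Fin.val heq
      simp only [Sum.elim_inl, Sum.elim_inr, Fin.coe_castAdd, Fin.coe_natAdd] at hv
      have := (c₁ v).isLt
      omega
    · -- both on the right
      have hv := congrArg Fin.val heq
      simp only [Sum.elim_inr, Fin.coe_natAdd] at hv
      have hcc : c₂ u = c₂ v := Fin.val_injective (by omega)
      have huv : u ≠ v := fun h => hne (congrArg Sum.inr h)
      rw [imgNbrJoinInr, imgNbrJoinInr] at himg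
      have hXu : (fun x => Sum.elim (fun a => Fin.castAdd k₂ (c₁ a))
          (fun b => Fin.natAdd k₁ (c₂ b)) (Sum.inr x)) '' G₂.neighborSet u =
          Fin.natAdd k₁ '' (c₂ '' G₂.neighborSet u) := by
        rw [← Set.image_comp]; rfl
      have hXv : (fun x => Sum.elim (fun a => Fin.castAdd k₂ (c₁ a))
          (fun b => Fin.natAdd k₁ (c₂ b)) (Sum.inr x)) '' G₂.neighborSet v =
          Fin.natAdd k₁ '' (c₂ '' G₂.neighborSet v) := by
        rw [← Set.image_comp]; rfl
      rw [hXu, hXv] at himg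
      have hdisj : ∀ S : Set β, Disjoint (Fin.natAdd k₁ '' (c₂ '' S))
          (Set.range fun x => Sum.elim (fun a => Fin.castAdd k₂ (c₁ a))
            (fun b => Fin.natAdd k₁ (c₂ b)) (Sum.inl x)) := by
        intro S
        rw [Set.disjoint_left]
        rintro z ⟨y, _, rfl⟩ ⟨a, ha⟩
        have hv' := congrArg Fin.val ha
        simp only [Sum.elim_inl, Fin.coe_castAdd, Fin.coe_natAdd] at hv'
        have := (c₁ a).isLt
        omega
      have hXeq := unionCancelOfDisjoint (hdisj _) (hdisj _) himg
      have : c₂ '' G₂.neighborSet u = c₂ '' G₂.neighborSet v :=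
        Set.image_injective.mpr (fun x y hxy => by
          have hxy' := congrArg Fin.val hxy
          simp only [Fin.coe_natAdd] at hxy'
          exact Fin.val_injective (by omega)) hXeq
      exact h₂.2 u v huv hcc this

lemma nlRestrictInl [Fintype α] [Fintype β] (G₁ : SimpleGraph α) (G₂ : SimpleGraph β)
    {k : ℕ} (c : α ⊕ β → Fin k) (hc : IsNLColoring (graphJoin G₁ G₂) c) :
    ∃ c₁ : α → Fin (Finset.image (fun a => c (Sum.inl a)) Finset.univ).card,
      IsNLColoring G₁ c₁ := by
  classical
  set s := Finset.image (fun a => c (Sum.inl a)) Finset.univ with hs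
  have hmem : ∀ a : α, c (Sum.inl a) ∈ s := fun a =>
    Finset.mem_image_of_mem _ (Finset.mem_univ a)
  let g : α → s := fun a => ⟨c (Sum.inl a), hmem a⟩
  let e := s.equivFin
  refine ⟨fun a => e (g a), ?_, ?_⟩
  · intro u v hadj h
    have : c (Sum.inl u) = c (Sum.inl v) := congrArg Subtype.val (e.injective h)
    exact hc.1 (Sum.inl u) (Sum.inl v) hadj this
  · intro u v huv hcc h
    have hcuv : c (Sum.inl u) = c (Sum.inl v) := congrArg Subtype.val (e.injective hcc)
    have h2 : g '' G₁.neighborSet u = g '' G₁.neighborSet v := by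
      have := congrArg (Set.image e.symm) h
      simpa [Set.image_image] using this
    have h3 : (fun a => c (Sum.inl a)) '' G₁.neighborSet u =
        (fun a => c (Sum.inl a)) '' G₁.neighborSet v := by
      have := congrArg (Set.image (Subtype.val : s → Fin k)) h2
      simpa [Set.image_image, g] using this
    have hne : (Sum.inl u : α ⊕ β) ≠ Sum.inl v := fun h' => huv (Sum.inl.inj h')
    apply hc.2 (Sum.inl u) (Sum.inl v) hne hcuv
    rw [imgNbrJoinInl, imgNbrJoinInl, h3]

lemma nlRestrictInr [Fintype α] [Fintype β] (G₁ : SimpleGraph α) (G₂ : SimpleGraph β)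
    {k : ℕ} (c : α ⊕ β → Fin k) (hc : IsNLColoring (graphJoin G₁ G₂) c) :
    ∃ c₂ : β → Fin (Finset.image (fun b => c (Sum.inr b)) Finset.univ).card,
      IsNLColoring G₂ c₂ := by
  classical
  set t := Finset.image (fun b => c (Sum.inr b)) Finset.univ with ht
  have hmem : ∀ b : β, c (Sum.inr b) ∈ t := fun b =>
    Finset.mem_image_of_mem _ (Finset.mem_univ b)
  let g : β → t := fun b => ⟨c (Sum.inr b), hmem b⟩
  let e := t.equivFin
  refine ⟨fun b => e (g b), ?_, ?_⟩
  · intro u v hadj h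
    have : c (Sum.inr u) = c (Sum.inr v) := congrArg Subtype.val (e.injective h)
    exact hc.1 (Sum.inr u) (Sum.inr v) hadj this
  · intro u v huv hcc h
    have hcuv : c (Sum.inr u) = c (Sum.inr v) := congrArg Subtype.val (e.injective hcc)
    have h2 : g '' G₂.neighborSet u = g '' G₂.neighborSet v := by
      have := congrArg (Set.image e.symm) h
      simpa [Set.image_image] using this
    have h3 : (fun b => c (Sum.inr b)) '' G₂.neighborSet u =
        (fun b => c (Sum.inr b)) '' G₂.neighborSet v := by
      have := congrArg (Set.image (Subtype.val : t → Fin k)) h2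
      simpa [Set.image_image, g] using this
    have hne : (Sum.inr u : α ⊕ β) ≠ Sum.inr v := fun h' => huv (Sum.inr.inj h')
    apply hc.2 (Sum.inr u) (Sum.inr v) hne hcuv
    rw [imgNbrJoinInr, imgNbrJoinInr, h3]

end NLAux

/-- The NL-chromatic number of a join is the sum of the NL-chromatic numbers. -/
theorem nlChromaticNumber_graphJoin
    {α β : Type*} [Fintype α] [Fintype β] (G₁ : SimpleGraph α) (G₂ : SimpleGraph β) :
    nlChromaticNumber (graphJoin G₁ G₂) = nlChromaticNumber G₁ + nlChromaticNumber G₂ := by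
  classical
  apply le_antisymm
  · -- upper bound
    have hne₁ : {k : ℕ | ∃ c : α → Fin k, IsNLColoring G₁ c}.Nonempty :=
      ⟨Fintype.card α, nlExists α G₁⟩
    have hne₂ : {k : ℕ | ∃ c : β → Fin k, IsNLColoring G₂ c}.Nonempty :=
      ⟨Fintype.card β, nlExists β G₂⟩
    obtain ⟨c₁, hc₁⟩ := Nat.sInf_mem hne₁
    obtain ⟨c₂, hc₂⟩ := Nat.sInf_mem hne₂
    obtain ⟨c, hc⟩ := nlJoinUpper G₁ G₂ hc₁ hc₂
    exact Nat.sInf_le ⟨c, hc⟩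
  · -- lower bound
    have hneJ : {k : ℕ | ∃ c : α ⊕ β → Fin k, IsNLColoring (graphJoin G₁ G₂) c}.Nonempty :=
      ⟨Fintype.card (α ⊕ β), nlExists (α ⊕ β) (graphJoin G₁ G₂)⟩
    obtain ⟨c, hc⟩ := Nat.sInf_mem hneJ
    set n := nlChromaticNumber (graphJoin G₁ G₂) with hn
    set s := Finset.image (fun a => c (Sum.inl a)) Finset.univ with hs
    set t := Finset.image (fun b => c (Sum.inr b)) Finset.univ with ht
    obtain ⟨c₁, hc₁⟩ := nlRestrictInl G₁ G₂ c hc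
    obtain ⟨c₂, hc₂⟩ := nlRestrictInr G₁ G₂ c hc
    have h₁ : nlChromaticNumber G₁ ≤ s.card := Nat.sInf_le ⟨c₁, hc₁⟩
    have h₂ : nlChromaticNumber G₂ ≤ t.card := Nat.sInf_le ⟨c₂, hc₂⟩
    have hdisj : Disjoint s t := by
      rw [Finset.disjoint_left]
      rintro x hxs hxt
      obtain ⟨a, _, ha⟩ := Finset.mem_image.mp hxs
      obtain ⟨b, _, hb⟩ := Finset.mem_image.mp hxt
      exact hc.1 (Sum.inl a) (Sum.inr b) trivial (ha.trans hb.symm)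
    have hcard : s.card + t.card ≤ n := by
      have h1 : (s ∪ t).card = s.card + t.card := Finset.card_union_of_disjoint hdisj
      have h2 : (s ∪ t).card ≤ Fintype.card (Fin n) := Finset.card_le_univ _
      simpa [h1] using h2
    omega
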